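/- If g : X × X → ℝ is a symmetric conditionally negative definite function with g(x,x) = 0 for all x, then for every γ > 0 the function k(x,y) = exp(−γ g(x,y)) is a positive semi-definite kernel (Schoenberg's theorem). -/

import Mathlib

/-- A function `k : X → X → ℝ` is a positive semi-definite kernel if it is symmetric
and every Gram quadratic form is nonnegative. -/
def IsPSDKernel {X : Type*} (k : X → X → ℝ) : Prop :=
  (∀ x y, k x y = k y x) ∧
    ∀ (n : ℕ) (x : Fin n → X) (c : Fin n → ℝ),
      0 ≤ ∑ i, ∑ j, c i * c j * k (x i) (x j)

/-- `g : X → X → ℝ` is conditionally negative definite if it is symmetric and the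
Gram quadratic form is nonpositive on coefficient vectors summing to zero. -/
def IsCND {X : Type*} (g : X → X → ℝ) : Prop :=
  (∀ x y, g x y = g y x) ∧
    ∀ (n : ℕ) (x : Fin n → X) (c : Fin n → ℝ), (∑ i, c i) = 0 →
      ∑ i, ∑ j, c i * c j * g (x i) (x j) ≤ 0

/-- Nonnegativity of the Gram quadratic form of a finite "matrix". -/
def FormNonneg {n : ℕ} (A : Fin n → Fin n → ℝ) : Prop :=
  ∀ c : Fin n → ℝ, 0 ≤ ∑ i, ∑ j, c i * c j * A i j

/-- Schur product theorem, in quadratic form language. -/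
lemma formNonneg_mul {n : ℕ} {A B : Fin n → Fin n → ℝ}
    (hAs : ∀ i j, A i j = A j i) (hA : FormNonneg A) (hB : FormNonneg B) :
    FormNonneg (fun i j => A i j * B i j) := by
  -- turn A into a PSD matrix and extract a Gram decomposition
  have hM : (Matrix.of A).PosSemidef := by
    refine Matrix.posSemidef_iff_dotProduct_mulVec.mpr ⟨?_, ?_⟩
    · ext i j
      simp [Matrix.conjTranspose_apply, hAs j i]
    · intro v
      have hv := hA v
      simp only [dotProduct, Matrix.mulVec, dotProduct, Pi.star_apply,
        star_trivial, Matrix.of_apply]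
      calc (0:ℝ) ≤ ∑ i, ∑ j, v i * v j * A i j := hv
        _ = ∑ i, v i * ∑ j, A i j * v j := by
            refine Finset.sum_congr rfl fun i _ => ?_
            rw [Finset.mul_sum]
            exact Finset.sum_congr rfl fun j _ => by ring
  open MatrixOrder in obtain ⟨P, hP⟩ := CStarAlgebra.nonneg_iff_eq_star_mul_self.mp hM.nonneg
  have hGram : ∀ i j, A i j = ∑ l, P l i * P l j := by
    intro i j
    have h1 : Matrix.of A i j = (P.conjTranspose * P) i j := by rw [hP, Matrix.star_eq_conjTranspose]
    simpa [Matrix.mul_apply, Matrix.conjTranspose_apply] using h1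
  intro c
  have key : ∑ i, ∑ j, c i * c j * (A i j * B i j)
      = ∑ l, ∑ i, ∑ j, (c i * P l i) * (c j * P l j) * B i j := by
    calc ∑ i, ∑ j, c i * c j * (A i j * B i j)
        = ∑ i, ∑ j, ∑ l, (c i * P l i) * (c j * P l j) * B i j := by
          refine Finset.sum_congr rfl fun i _ => Finset.sum_congr rfl fun j _ => ?_
          rw [hGram i j, Finset.sum_mul, Finset.mul_sum]
          exact Finset.sum_congr rfl fun l _ => by ring
      _ = ∑ i, ∑ l, ∑ j, (c i * P l i) * (c j * P l j) * B i j :=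
          Finset.sum_congr rfl fun i _ => Finset.sum_comm
      _ = ∑ l, ∑ i, ∑ j, (c i * P l i) * (c j * P l j) * B i j :=
          Finset.sum_comm
  rw [key]
  exact Finset.sum_nonneg fun l _ => hB fun i => c i * P l i

lemma formNonneg_pow {n : ℕ} {A : Fin n → Fin n → ℝ}
    (hAs : ∀ i j, A i j = A j i) (hA : FormNonneg A) (m : ℕ) :
    FormNonneg (fun i j => A i j ^ m) := by
  induction m with
  | zero =>
      intro c
      simp only [pow_zero, mul_one]
      have h : ∑ i, ∑ j, c i * c j = (∑ i, c i) * (∑ j, c j) := by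
        rw [Finset.sum_mul]
        exact Finset.sum_congr rfl fun i _ => (Finset.mul_sum _ _ _).symm
      rw [h]
      exact mul_self_nonneg _
  | succ m ih =>
      have h := formNonneg_mul hAs hA ih
      intro c
      have h2 := h c
      simpa [pow_succ, mul_comm, mul_left_comm, mul_assoc] using h2

lemma formNonneg_exp {n : ℕ} {A : Fin n → Fin n → ℝ}
    (hAs : ∀ i j, A i j = A j i) (hA : FormNonneg A) :
    FormNonneg (fun i j => Real.exp (A i j)) := by
  intro c
  -- each entry's exponential series
  have hentry : ∀ i j : Fin n,
      HasSum (fun m : ℕ => c i * c j * (A i j ^ m / (Nat.factorial m : ℝ)))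
        (c i * c j * Real.exp (A i j)) := by
    intro i j
    have h := NormedSpace.expSeries_div_hasSum_exp (A i j)
    rw [← Real.exp_eq_exp_ℝ] at h
    exact h.mul_left _
  have hsum : HasSum
      (fun m : ℕ => ∑ i, ∑ j, c i * c j * (A i j ^ m / (Nat.factorial m : ℝ)))
      (∑ i, ∑ j, c i * c j * Real.exp (A i j)) :=
    hasSum_sum fun i _ => hasSum_sum fun j _ => hentry i j
  refine hasSum_le (fun m => ?_) hasSum_zero hsum
  have h : ∑ i, ∑ j, c i * c j * (A i j ^ m / (Nat.factorial m : ℝ))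
      = (∑ i, ∑ j, c i * c j * A i j ^ m) / (Nat.factorial m : ℝ) := by
    rw [Finset.sum_div]
    refine Finset.sum_congr rfl fun i _ => ?_
    rw [Finset.sum_div]
    exact Finset.sum_congr rfl fun j _ => by ring
  rw [h]
  exact div_nonneg (formNonneg_pow hAs hA m c) (by positivity)

/-- Decomposition of a double sum over `Fin (n+1)`. -/
lemma double_sum_succ {n : ℕ} (F : Fin (n + 1) → Fin (n + 1) → ℝ) :
    ∑ i, ∑ j, F i j
      = F 0 0 + (∑ j : Fin n, F 0 j.succ) + (∑ i : Fin n, F i.succ 0)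
        + ∑ i : Fin n, ∑ j : Fin n, F i.succ j.succ := by
  have h3 : ∑ i : Fin n, ∑ j, F i.succ j
      = ∑ i : Fin n, (F i.succ 0 + ∑ j : Fin n, F i.succ j.succ) :=
    Finset.sum_congr rfl fun i _ => Fin.sum_univ_succ _
  rw [Fin.sum_univ_succ (f := fun i => ∑ j, F i j),
    Fin.sum_univ_succ (f := fun j => F 0 j), h3, Finset.sum_add_distrib]
  ring

/-- Schoenberg's theorem: if `g` is a symmetric conditionally negative definite
function with `g x x = 0` for all `x`, then for every `γ > 0` the function
`k(x,y) = exp (−γ g(x,y))` is a positive semi-definite kernel. -/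
theorem schoenberg {X : Type*} (g : X → X → ℝ)
    (hg : IsCND g) (hdiag : ∀ x, g x x = 0) :
    ∀ γ : ℝ, 0 < γ → IsPSDKernel (fun x y => Real.exp (-γ * g x y)) := by
  intro γ hγ
  obtain ⟨hsym, hcnd⟩ := hg
  constructor
  · intro x y
    dsimp only
    rw [hsym x y]
  · intro n x c
    rcases Nat.eq_zero_or_pos n with rfl | hn
    · simp
    set x₀ : X := x ⟨0, hn⟩ with hx₀
    -- the centered kernel
    set A : Fin n → Fin n → ℝ :=
      fun i j => γ * (g (x i) x₀ + g (x j) x₀ - g (x i) (x j)) with hA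
    have hAs : ∀ i j, A i j = A j i := by
      intro i j
      simp only [hA]
      rw [hsym (x i) (x j)]
      ring
    have pull_left : ∀ (m : ℕ) (a : ℝ) (f : Fin m → ℝ),
        ∑ i, a * f i = a * ∑ i, f i := fun m a f => (Finset.mul_sum _ _ _).symm
    have hAform : FormNonneg A := by
      intro d
      -- apply CND to n+1 points
      have key0 := hcnd (n + 1) (Fin.cons x₀ x) (Fin.cons (-(∑ i, d i)) d)
        (by simp [Fin.sum_cons])
      rw [double_sum_succ] at key0
      simp only [Fin.cons_zero, Fin.cons_succ] at key0
      rw [hdiag x₀] at key0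
      have e1 : ∑ j : Fin n, -(∑ i, d i) * d j * g x₀ (x j)
          = -(∑ i, d i) * ∑ j, d j * g (x j) x₀ := by
        rw [Finset.mul_sum]
        refine Finset.sum_congr rfl fun j _ => ?_
        rw [hsym x₀ (x j)]
        ring
      have e2 : ∑ i : Fin n, d i * -(∑ i, d i) * g (x i) x₀
          = -(∑ i, d i) * ∑ i, d i * g (x i) x₀ := by
        rw [Finset.mul_sum]
        exact Finset.sum_congr rfl fun i _ => by ring
      rw [e1, e2] at key0
      -- expand the A-form
      have inner : ∀ i : Fin n, ∑ j, d i * d j * A i j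
          = (γ * (∑ j, d j)) * (d i * g (x i) x₀)
            + (γ * (∑ j, d j * g (x j) x₀)) * d i
            + (-γ) * ∑ j, d i * d j * g (x i) (x j) := by
        intro i
        calc ∑ j, d i * d j * A i j
            = ∑ j, ((γ * d i * g (x i) x₀) * d j
                + (γ * d i) * (d j * g (x j) x₀)
                + (-γ) * (d i * d j * g (x i) (x j))) := by
              refine Finset.sum_congr rfl fun j _ => ?_
              simp only [hA]
              ring
          _ = (∑ j, (γ * d i * g (x i) x₀) * d j)
                + (∑ j, (γ * d i) * (d j * g (x j) x₀))
                + ∑ j, (-γ) * (d i * d j * g (x i) (x j)) := by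
              rw [Finset.sum_add_distrib, Finset.sum_add_distrib]
          _ = (γ * d i * g (x i) x₀) * (∑ j, d j)
                + (γ * d i) * (∑ j, d j * g (x j) x₀)
                + (-γ) * ∑ j, d i * d j * g (x i) (x j) := by
              rw [pull_left, pull_left, pull_left]
          _ = (γ * (∑ j, d j)) * (d i * g (x i) x₀)
                + (γ * (∑ j, d j * g (x j) x₀)) * d i
                + (-γ) * ∑ j, d i * d j * g (x i) (x j) := by ring
      have houter : ∑ i, ∑ j, d i * d j * A i j
          = (γ * (∑ j, d j)) * (∑ i, d i * g (x i) x₀)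
            + (γ * (∑ j, d j * g (x j) x₀)) * (∑ i, d i)
            + (-γ) * ∑ i, ∑ j, d i * d j * g (x i) (x j) := by
        calc ∑ i, ∑ j, d i * d j * A i j
            = ∑ i, ((γ * (∑ j, d j)) * (d i * g (x i) x₀)
                + (γ * (∑ j, d j * g (x j) x₀)) * d i
                + (-γ) * ∑ j, d i * d j * g (x i) (x j)) :=
              Finset.sum_congr rfl fun i _ => inner i
          _ = (∑ i, (γ * (∑ j, d j)) * (d i * g (x i) x₀))
                + (∑ i, (γ * (∑ j, d j * g (x j) x₀)) * d i)
                + ∑ i, (-γ) * ∑ j, d i * d j * g (x i) (x j) := by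
              rw [Finset.sum_add_distrib, Finset.sum_add_distrib]
          _ = (γ * (∑ j, d j)) * (∑ i, d i * g (x i) x₀)
                + (γ * (∑ j, d j * g (x j) x₀)) * (∑ i, d i)
                + (-γ) * ∑ i, ∑ j, d i * d j * g (x i) (x j) := by
              rw [pull_left, pull_left, pull_left]
      rw [houter]
      have h2 : 0 ≤ 2 * (∑ i, d i) * (∑ i, d i * g (x i) x₀)
          - ∑ i, ∑ j, d i * d j * g (x i) (x j) := by nlinarith [key0]
      nlinarith [mul_nonneg hγ.le h2]
    -- exponentiate
    have hexpA := formNonneg_exp hAs hAform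
    set c' : Fin n → ℝ := fun i => c i * Real.exp (-γ * g (x i) x₀) with hc'
    have h := hexpA c'
    have heq : ∑ i, ∑ j, c' i * c' j * Real.exp (A i j)
        = ∑ i, ∑ j, c i * c j * Real.exp (-γ * g (x i) (x j)) := by
      refine Finset.sum_congr rfl fun i _ => Finset.sum_congr rfl fun j _ => ?_
      simp only [hc', hA]
      rw [mul_mul_mul_comm, mul_assoc, ← Real.exp_add, ← Real.exp_add]
      congr 2
      ring
    rw [heq] at h
    exact h
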